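/- arXiv:2309.05688 — 2 statements merged into one kernel-verified Lean document; each statement's English description precedes it below -/
import Mathlib

section
/- If C is an acyclic finite chain complex of finite-dimensional real inner product spaces, where each C_q is given the inner product making its preferred basis orthonormal, then log τ(C) = (1/2) Σ_{q=0}^N (-1)^{q+1} q · log det(-Δ_q), where Δ_q = -(∂*∂ + ∂∂*) is the combinatorial Laplacian on C_q. -/
open Matrix

/-- `prevSize r q = r (q−1)`, with the convention that it is `0` for `q = 0`. -/
def prevSize (r : ℕ → ℕ) : ℕ → ℕ
  | 0 => 0
  | q + 1 => r q

/-- The negative `−Δ_q = ∂*∂ + ∂∂*` of the combinatorial Laplacian of a chain complex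
given in coordinates: `C_q = ℝ^{n q}` with its preferred orthonormal basis, and
`A q : Matrix (Fin (n q)) (Fin (n (q+1))) ℝ` the matrix of `∂ : C_{q+1} → C_q`, so
that the adjoint `∂*` is given by the transpose. -/
def negLap (n : ℕ → ℕ) (A : ∀ q, Matrix (Fin (n q)) (Fin (n (q + 1))) ℝ) :
    ∀ q, Matrix (Fin (n q)) (Fin (n q)) ℝ
  | 0 => A 0 * (A 0)ᵀ
  | q + 1 => A (q + 1) * (A (q + 1))ᵀ + (A q)ᵀ * A q

noncomputable section
namespace RS
open RealInnerProductSpace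

variable {m t : ℕ}

lemma eSum_apply (f : Fin t → EuclideanSpace ℝ (Fin m)) (i : Fin m) :
    (∑ a, f a) i = ∑ a, f a i := by
  rw [WithLp.ofLp_sum]; exact Finset.sum_apply i Finset.univ _

def onbMat (K : Submodule ℝ (EuclideanSpace ℝ (Fin m))) (c : OrthonormalBasis (Fin t) ℝ K) :
    Matrix (Fin m) (Fin t) ℝ :=
  Matrix.of fun i a => (c a : EuclideanSpace ℝ (Fin m)) i

lemma inner_eq (x y : EuclideanSpace ℝ (Fin m)) : ⟪x, y⟫ = ∑ i, x i * y i := by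
  simp [PiLp.inner_apply, RCLike.inner_apply, mul_comm]

lemma onbMat_orth (K : Submodule ℝ (EuclideanSpace ℝ (Fin m)))
    (c : OrthonormalBasis (Fin t) ℝ K) : (onbMat K c)ᵀ * onbMat K c = 1 := by
  ext a b
  have h := orthonormal_iff_ite.mp c.orthonormal a b
  rw [Submodule.coe_inner, inner_eq] at h
  simp only [Matrix.mul_apply, transpose_apply, onbMat, Matrix.of_apply]
  rw [h]
  simp [Matrix.one_apply]

lemma onbMat_col_mem (K : Submodule ℝ (EuclideanSpace ℝ (Fin m)))
    (c : OrthonormalBasis (Fin t) ℝ K) (a : Fin t) : WithLp.toLp 2 (fun i => onbMat K c i a) ∈ K := by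
  have : WithLp.toLp 2 (fun i => onbMat K c i a) = ((c a : EuclideanSpace ℝ (Fin m))) := rfl
  rw [this]; exact (c a).2

lemma onbMat_mulVec_mem (K : Submodule ℝ (EuclideanSpace ℝ (Fin m)))
    (c : OrthonormalBasis (Fin t) ℝ K) (y : Fin t → ℝ) : WithLp.toLp 2 ((onbMat K c).mulVec y) ∈ K := by
  have h : WithLp.toLp 2 ((onbMat K c).mulVec y) = ∑ a, y a • (c a : EuclideanSpace ℝ (Fin m)) := by
    ext i
    rw [eSum_apply]
    simp [Matrix.mulVec, dotProduct, onbMat, mul_comm]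
  rw [h]
  exact Submodule.sum_mem _ fun a _ => Submodule.smul_mem _ _ (c a).2

lemma onbMat_proj (K : Submodule ℝ (EuclideanSpace ℝ (Fin m)))
    (c : OrthonormalBasis (Fin t) ℝ K) (x : EuclideanSpace ℝ (Fin m)) (hx : x ∈ K) :
    (onbMat K c).mulVec ((onbMat K c)ᵀ.mulVec x) = x := by
  have h := c.sum_repr' ⟨x, hx⟩
  have h3 := congrArg (Subtype.val) h
  simp only [AddSubmonoidClass.coe_finset_sum, SetLike.val_smul, Submodule.coe_inner] at h3
  funext i
  conv_rhs => rw [← h3]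
  rw [eSum_apply]
  simp only [Matrix.mulVec, dotProduct, transpose_apply, onbMat, Matrix.of_apply]
  apply Finset.sum_congr rfl
  intro a _
  have hs : ((⟪(c a : EuclideanSpace ℝ (Fin m)), x⟫ : ℝ) • (c a : EuclideanSpace ℝ (Fin m))) i
      = ⟪(c a : EuclideanSpace ℝ (Fin m)), x⟫ * (c a : EuclideanSpace ℝ (Fin m)) i := rfl
  rw [hs, inner_eq, Finset.sum_mul, Finset.mul_sum]
  apply Finset.sum_congr rfl
  intros; ring

lemma onbMat_perp (K : Submodule ℝ (EuclideanSpace ℝ (Fin m)))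
    (c : OrthonormalBasis (Fin t) ℝ K) (x : EuclideanSpace ℝ (Fin m))
    (hx : x ∈ Kᗮ) : (onbMat K c)ᵀ.mulVec x = 0 := by
  funext a
  have h := hx (c a : EuclideanSpace ℝ (Fin m)) (c a).2
  rw [inner_eq] at h
  simpa [Matrix.mulVec, dotProduct, onbMat] using h

lemma exists_UV (m rr ss : ℕ) (hm : rr + ss = m) (W : Submodule ℝ (EuclideanSpace ℝ (Fin m)))
    (hr : Module.finrank ℝ W = rr) :
    ∃ (U : Matrix (Fin m) (Fin rr) ℝ) (V : Matrix (Fin m) (Fin ss) ℝ),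
      Uᵀ * U = 1 ∧ Vᵀ * V = 1 ∧ U * Uᵀ + V * Vᵀ = 1 ∧
      (∀ a, WithLp.toLp 2 (fun i => U i a) ∈ W) ∧
      (∀ y : Fin ss → ℝ, WithLp.toLp 2 (V.mulVec y) ∈ Wᗮ) ∧
      (∀ x : Fin m → ℝ, WithLp.toLp 2 x ∈ W → U.mulVec (Uᵀ.mulVec x) = x) ∧
      (∀ x : Fin m → ℝ, WithLp.toLp 2 x ∈ W → Vᵀ.mulVec x = 0) := by
  have hs : Module.finrank ℝ (Wᗮ : Submodule ℝ (EuclideanSpace ℝ (Fin m))) = ss := by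
    have h1 := Submodule.finrank_add_finrank_orthogonal W
    rw [hr, finrank_euclideanSpace_fin] at h1
    omega
  set cU := (stdOrthonormalBasis ℝ W).reindex (finCongr hr) with hcU
  set cV := (stdOrthonormalBasis ℝ (Wᗮ : Submodule ℝ (EuclideanSpace ℝ (Fin m)))).reindex
      (finCongr hs) with hcV
  refine ⟨onbMat W cU, onbMat _ cV, onbMat_orth _ _, onbMat_orth _ _, ?_,
    onbMat_col_mem _ _, onbMat_mulVec_mem _ _, fun x hx => onbMat_proj _ _ _ hx, ?_⟩
  · -- completeness
    have key : ∀ x : EuclideanSpace ℝ (Fin m),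
        (onbMat W cU).mulVec ((onbMat W cU)ᵀ.mulVec x)
          + (onbMat _ cV).mulVec ((onbMat _ cV)ᵀ.mulVec x) = x := by
      intro x
      obtain ⟨y, hy, z, hz, rfl⟩ := W.exists_add_mem_mem_orthogonal x
      have e1 : (onbMat W cU)ᵀ.mulVec (y + z) = (onbMat W cU)ᵀ.mulVec y := by
        rw [Matrix.mulVec_add, onbMat_perp _ cU z hz, add_zero]
      have e2 : (onbMat _ cV)ᵀ.mulVec (y + z) = (onbMat _ cV)ᵀ.mulVec z := by
        rw [Matrix.mulVec_add, onbMat_perp _ cV y (Submodule.le_orthogonal_orthogonal W hy),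
          zero_add]
      rw [WithLp.ofLp_add, e1, e2, onbMat_proj _ cU y hy, onbMat_proj _ cV z hz]
    ext i j
    have hk := key (WithLp.toLp 2 (Pi.single j 1))
    simp only [WithLp.ofLp_toLp] at hk
    rw [Matrix.mulVec_mulVec, Matrix.mulVec_mulVec, ← Matrix.add_mulVec] at hk
    have h2 := congrFun hk i
    rw [Matrix.mulVec_single] at h2
    simpa [Matrix.one_apply, Pi.single_apply, eq_comm] using h2
  · intro x hx
    exact onbMat_perp _ cV _ (Submodule.le_orthogonal_orthogonal W hx)

variable {rr ss : ℕ}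

lemma det_conj (hm : rr + ss = m) (U : Matrix (Fin m) (Fin rr) ℝ)
    (V : Matrix (Fin m) (Fin ss) ℝ) (hcomp : U * Uᵀ + V * Vᵀ = 1)
    (X : Matrix (Fin rr) (Fin rr) ℝ) (Y : Matrix (Fin ss) (Fin ss) ℝ) :
    (U * X * Uᵀ + V * Y * Vᵀ).det = X.det * Y.det := by
  have hm' : m = rr + ss := hm.symm
  set f : Fin m ≃ Fin rr ⊕ Fin ss := (finCongr hm').trans finSumFinEquiv.symm with hf
  have hTT : fromCols U V * (fromCols U V)ᵀ = 1 := by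
    rw [transpose_fromCols, fromCols_mul_fromRows, hcomp]
  have h1 : ((fromCols U V).submatrix id ⇑f) * ((fromCols U V)ᵀ.submatrix ⇑f id) = 1 := by
    rw [Matrix.submatrix_mul_equiv, hTT, Matrix.submatrix_id_id]
  have hd : ((fromCols U V).submatrix id ⇑f).det
      * ((fromCols U V)ᵀ.submatrix ⇑f id).det = 1 := by
    rw [← Matrix.det_mul, h1, Matrix.det_one]
  have h3 : U * X * Uᵀ + V * Y * Vᵀ
      = ((fromCols U V).submatrix id ⇑f) * ((fromBlocks X 0 0 Y).submatrix ⇑f ⇑f)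
        * ((fromCols U V)ᵀ.submatrix ⇑f id) := by
    rw [Matrix.submatrix_mul_equiv, Matrix.submatrix_mul_equiv, Matrix.submatrix_id_id,
      fromCols_mul_fromBlocks, transpose_fromCols, fromCols_mul_fromRows]
    simp [Matrix.mul_assoc]
  rw [h3, Matrix.det_mul, Matrix.det_mul, Matrix.det_submatrix_equiv_self,
    Matrix.det_fromBlocks_zero₂₁]
  linear_combination X.det * Y.det * hd

lemma det_cols (hm : rr + ss = m) (U : Matrix (Fin m) (Fin rr) ℝ)
    (V : Matrix (Fin m) (Fin ss) ℝ) (hcomp : U * Uᵀ + V * Vᵀ = 1)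
    (Bm : Matrix (Fin m) (Fin rr) ℝ) (Bt : Matrix (Fin m) (Fin ss) ℝ)
    (hZ : Vᵀ * Bm = 0) :
    |((fromCols Bm Bt).submatrix id ⇑((finCongr hm.symm).trans finSumFinEquiv.symm)).det|
      = |(Uᵀ * Bm).det| * |(Vᵀ * Bt).det| := by
  have hm' : m = rr + ss := hm.symm
  set f : Fin m ≃ Fin rr ⊕ Fin ss := (finCongr hm').trans finSumFinEquiv.symm with hf
  have hTT : fromCols U V * (fromCols U V)ᵀ = 1 := by
    rw [transpose_fromCols, fromCols_mul_fromRows, hcomp]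
  have hd : ((fromCols U V).submatrix id ⇑f).det
      * ((fromCols U V)ᵀ.submatrix ⇑f id).det = 1 := by
    rw [← Matrix.det_mul, Matrix.submatrix_mul_equiv, hTT, Matrix.submatrix_id_id,
      Matrix.det_one]
  have habs : |((fromCols U V)ᵀ.submatrix ⇑f id).det| = 1 := by
    have h2 : ((fromCols U V)ᵀ.submatrix ⇑f id).det
        = ((fromCols U V).submatrix id ⇑f).det := by
      rw [← Matrix.det_transpose ((fromCols U V).submatrix id ⇑f),
        Matrix.transpose_submatrix]
    rw [h2] at hd ⊢
    rcases mul_self_eq_one_iff.mp hd with h | h <;> rw [h] <;> norm_num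
  have h4 : ((fromCols U V)ᵀ.submatrix ⇑f id)
        * ((fromCols Bm Bt).submatrix id ⇑f)
      = (fromBlocks (Uᵀ * Bm) (Uᵀ * Bt) (Vᵀ * Bm) (Vᵀ * Bt)).submatrix ⇑f ⇑f := by
    have h5 := Matrix.submatrix_mul_equiv ((fromCols U V)ᵀ) (fromCols Bm Bt)
      (⇑f) (Equiv.refl (Fin m)) (⇑f)
    simp only [Equiv.coe_refl, Matrix.submatrix_id_id] at h5
    rw [show ((fromCols Bm Bt).submatrix id ⇑f)
        = (fromCols Bm Bt).submatrix (⇑(Equiv.refl (Fin m))) ⇑f by rfl]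
    rw [show ((fromCols U V)ᵀ.submatrix ⇑f id)
        = (fromCols U V)ᵀ.submatrix ⇑f ⇑(Equiv.refl (Fin m)) by rfl]
    rw [Matrix.submatrix_mul_equiv, transpose_fromCols, fromRows_mul_fromCols]
  have h5 := congrArg Matrix.det h4
  rw [Matrix.det_mul, Matrix.det_submatrix_equiv_self, hZ,
    Matrix.det_fromBlocks_zero₂₁] at h5
  have h6 := congrArg abs h5
  rw [abs_mul, habs, one_mul, abs_mul] at h6
  exact h6

lemma col_mulVec {k : ℕ} (M : Matrix (Fin m) (Fin k) ℝ) (j : Fin k) :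
    (fun i => M i j) = M.mulVec (Pi.single j 1) := by
  funext i; simp

lemma proj_mat {k : ℕ} (U : Matrix (Fin m) (Fin rr) ℝ) (C : Matrix (Fin m) (Fin k) ℝ)
    (h : ∀ j, U.mulVec (Uᵀ.mulVec (fun i => C i j)) = fun i => C i j) :
    U * (Uᵀ * C) = C := by
  ext i j
  have h2 := congrFun (h j) i
  simpa [Matrix.mul_apply, Matrix.mulVec, dotProduct] using h2

lemma perp_mat {k : ℕ} (V : Matrix (Fin m) (Fin ss) ℝ) (C : Matrix (Fin m) (Fin k) ℝ)
    (h : ∀ j, Vᵀ.mulVec (fun i => C i j) = 0) : Vᵀ * C = 0 := by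
  ext a j
  have h2 := congrFun (h j) a
  simpa [Matrix.mul_apply, Matrix.mulVec, dotProduct] using h2

lemma conj_helper {k : ℕ} (U : Matrix (Fin m) (Fin rr) ℝ) (Vv : Matrix (Fin k) (Fin ss) ℝ)
    (G : Matrix (Fin rr) (Fin ss) ℝ) (hVV : Vvᵀ * Vv = 1) :
    (U * G * Vvᵀ) * (U * G * Vvᵀ)ᵀ = U * (G * Gᵀ) * Uᵀ := by
  rw [Matrix.transpose_mul, Matrix.transpose_mul, Matrix.transpose_transpose]
  simp only [Matrix.mul_assoc]
  rw [show Vvᵀ * (Vv * (Gᵀ * Uᵀ)) = Gᵀ * Uᵀ by rw [← Matrix.mul_assoc, hVV, Matrix.one_mul]]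

lemma conj_helper2 {k : ℕ} (U : Matrix (Fin m) (Fin rr) ℝ) (Vv : Matrix (Fin k) (Fin ss) ℝ)
    (G : Matrix (Fin rr) (Fin ss) ℝ) (hUU : Uᵀ * U = 1) :
    (U * G * Vvᵀ)ᵀ * (U * G * Vvᵀ) = Vv * (Gᵀ * G) * Vvᵀ := by
  rw [Matrix.transpose_mul, Matrix.transpose_mul, Matrix.transpose_transpose]
  simp only [Matrix.mul_assoc]
  rw [show Uᵀ * (U * (G * Vvᵀ)) = G * Vvᵀ by rw [← Matrix.mul_assoc, hUU, Matrix.one_mul]]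

lemma disj (W : Submodule ℝ (EuclideanSpace ℝ (Fin m))) (x : Fin m → ℝ)
    (hx : WithLp.toLp 2 x ∈ W) (hx' : WithLp.toLp 2 x ∈ Wᗮ) : x = 0 := by
  have h := (Submodule.mem_orthogonal W _).mp hx' _ hx
  have h2 : WithLp.toLp 2 x = (0 : EuclideanSpace ℝ (Fin m)) := by
    rw [← inner_self_eq_zero (𝕜 := ℝ)]
    exact h
  simpa using congrArg WithLp.ofLp h2

lemma sum_id (p s φ : ℕ → ℝ) (N : ℕ) (hs0 : s 0 = 0) (hφ0 : φ 0 = 0)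
    (hs : ∀ q, s (q + 1) = p q - φ (q + 1)) (hpN : p N = 0) (hφN : φ (N + 1) = 0) :
    ∑ q ∈ Finset.range (N + 1), (-1 : ℝ) ^ q * (p q + s q)
      = (1 / 2) * ∑ q ∈ Finset.range (N + 1),
          (-1 : ℝ) ^ (q + 1) * q * (2 * φ (q + 1) + 2 * φ q) := by
  have lemA : ∀ M : ℕ, ∑ q ∈ Finset.range (M + 1), (-1 : ℝ) ^ q * (p q + s q)
      = (-1 : ℝ) ^ M * p M - ∑ q ∈ Finset.range (M + 1), (-1 : ℝ) ^ q * φ q := by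
    intro M
    induction M with
    | zero => simp [hs0, hφ0]
    | succ M ih =>
      rw [Finset.sum_range_succ, ih, Finset.sum_range_succ (fun q => (-1 : ℝ) ^ q * φ q) (M + 1),
        hs M]
      ring
  have lemB : ∀ M : ℕ, ∑ q ∈ Finset.range (M + 1),
        (-1 : ℝ) ^ (q + 1) * q * (2 * φ (q + 1) + 2 * φ q)
      = 2 * (-1 : ℝ) ^ (M + 1) * M * φ (M + 1)
        - 2 * ∑ q ∈ Finset.range (M + 1), (-1 : ℝ) ^ q * φ q := by
    intro M
    induction M with
    | zero => simp [hφ0]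
    | succ M ih =>
      rw [Finset.sum_range_succ, ih, Finset.sum_range_succ (fun q => (-1 : ℝ) ^ q * φ q) (M + 1)]
      push_cast
      ring
  rw [lemA N, lemB N, hpN, hφN]
  ring

lemma det_mul_tr {k : ℕ} (F : Matrix (Fin k) (Fin k) ℝ) : (F * Fᵀ).det = F.det ^ 2 := by
  rw [Matrix.det_mul, Matrix.det_transpose, sq]

lemma det_tr_mul {k : ℕ} (F : Matrix (Fin k) (Fin k) ℝ) : (Fᵀ * F).det = F.det ^ 2 := by
  rw [Matrix.det_mul, Matrix.det_transpose, sq]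

end RS
end


set_option maxHeartbeats 1600000 in
/-- Ray–Singer, Proposition 1.7: for an acyclic finite based chain complex
`C_N → ⋯ → C_0` of finite-dimensional real inner product spaces (each `C_q = ℝ^{n q}`
with the inner product making the preferred basis orthonormal),
`log τ(C) = (1/2) Σ_{q} (−1)^{q+1} q log det(−Δ_q)`, where
`log τ(C) = Σ_q (−1)^q log [(b_q, b̃_{q−1})/c_q]` for any choice of bases `b_q` of the
boundary spaces `B_q` with lifts `b̃_q`. -/
theorem torsion_eq_laplacian_dets
    (N : ℕ) (n r : ℕ → ℕ)
    (A : ∀ q, Matrix (Fin (n q)) (Fin (n (q + 1))) ℝ)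
    -- chain complex: `∂ ∘ ∂ = 0`
    (hAA : ∀ q, A q * A (q + 1) = 0)
    -- acyclicity: vanishing homology in all degrees
    (hsurj : LinearMap.range (Matrix.mulVecLin (A 0)) = ⊤)
    (hexact : ∀ q, LinearMap.ker (Matrix.mulVecLin (A q))
      = LinearMap.range (Matrix.mulVecLin (A (q + 1))))
    -- `b q` is a basis of `B_q = im(∂ : C_{q+1} → C_q)`, with lifts `b̃`
    (b : ∀ q, Fin (r q) → Fin (n q) → ℝ)
    (btil : ∀ q, Fin (prevSize r q) → Fin (n q) → ℝ)
    (hn : ∀ q, r q + prevSize r q = n q)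
    (hbspan : ∀ q, Submodule.span ℝ (Set.range (b q))
      = LinearMap.range (Matrix.mulVecLin (A q)))
    (hbind : ∀ q, LinearIndependent ℝ (b q))
    (hbtil : ∀ q (i : Fin (r q)), (A q).mulVec (btil (q + 1) i) = b q i)
    -- the complex is concentrated in degrees `0, …, N`
    (hfin : ∀ q, N < q → n q = 0) :
    ∑ q ∈ Finset.range (N + 1), (-1 : ℝ) ^ q *
        Real.log |(Matrix.of fun i j =>
          Fin.append (b q) (btil q) (Fin.cast (hn q).symm j) i).det|
      = (1 / 2) * ∑ q ∈ Finset.range (N + 1), (-1 : ℝ) ^ (q + 1) * q *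
          Real.log (negLap n A q).det := by
  classical
  -- ranks of the boundary spaces
  have hrank : ∀ q, Module.finrank ℝ (LinearMap.range (Matrix.mulVecLin (A q))) = r q := by
    intro q
    rw [← hbspan q, finrank_span_eq_card (hbind q)]
    exact Fintype.card_fin _
  have hrank' : ∀ q, Module.finrank ℝ (Submodule.comap
      (WithLp.linearEquiv 2 ℝ (Fin (n q) → ℝ)).toLinearMap
      (LinearMap.range (Matrix.mulVecLin (A q)))) = r q := by
    intro q
    rw [Submodule.comap_equiv_eq_map_symm, LinearEquiv.finrank_map_eq, hrank q]
  -- orthonormal bases of the boundary spaces and their orthogonal complements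
  choose U V hUU hVV hcomp hUcol hVmem hproj hVperp using
    fun q => RS.exists_UV (n q) (r q) (prevSize r q) (hn q)
      (Submodule.comap (WithLp.linearEquiv 2 ℝ (Fin (n q) → ℝ)).toLinearMap
        (LinearMap.range (Matrix.mulVecLin (A q)))) (hrank' q)
  -- basic membership facts
  have hWmem : ∀ q (y : Fin (n (q + 1)) → ℝ),
      (A q).mulVec y ∈ LinearMap.range (Matrix.mulVecLin (A q)) :=
    fun q y => ⟨y, by simp⟩
  have hAcol : ∀ q (j : Fin (n (q + 1))),
      (fun i => A q i j) ∈ LinearMap.range (Matrix.mulVecLin (A q)) := by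
    intro q j
    have h2 : Matrix.mulVecLin (A q) (Pi.single j 1) = fun i => A q i j := by
      rw [Matrix.mulVecLin_apply, Matrix.mulVec_single]
      funext i
      simp
    exact LinearMap.mem_range.mpr ⟨Pi.single j 1, h2⟩
  have hBcol : ∀ q (a : Fin (r q)),
      (fun i => b q a i) ∈ LinearMap.range (Matrix.mulVecLin (A q)) := by
    intro q a
    have h : b q a ∈ Submodule.span ℝ (Set.range (b q)) :=
      Submodule.subset_span (Set.mem_range_self a)
    rw [hbspan q] at h
    exact h
  have hkill : ∀ q (x : Fin (n (q + 1)) → ℝ),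
      x ∈ LinearMap.range (Matrix.mulVecLin (A (q + 1))) → (A q).mulVec x = 0 := by
    rintro q x ⟨y, rfl⟩
    rw [Matrix.mulVecLin_apply, Matrix.mulVec_mulVec, hAA q, Matrix.zero_mulVec]
  have hker : ∀ q (x : Fin (n (q + 1)) → ℝ), (A q).mulVec x = 0 →
      x ∈ LinearMap.range (Matrix.mulVecLin (A (q + 1))) := by
    intro q x hx
    have h2 : Matrix.mulVecLin (A q) x = 0 := by rw [Matrix.mulVecLin_apply]; exact hx
    rw [← hexact q]
    exact LinearMap.mem_ker.mpr h2
  have hdisj : ∀ q (x : Fin (n q) → ℝ), x ∈ LinearMap.range (Matrix.mulVecLin (A q)) →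
      WithLp.toLp 2 x ∈ (Submodule.comap (WithLp.linearEquiv 2 ℝ (Fin (n q) → ℝ)).toLinearMap
        (LinearMap.range (Matrix.mulVecLin (A q))))ᗮ → x = 0 := by
    intro q x hx hx'
    exact RS.disj _ x hx hx'
  -- the matrices of the preferred data
  set Bm : ∀ q, Matrix (Fin (n q)) (Fin (r q)) ℝ :=
    fun q => Matrix.of fun i a => b q a i with hBm
  set Bt : ∀ q, Matrix (Fin (n q)) (Fin (prevSize r q)) ℝ :=
    fun q => Matrix.of fun i a => btil q a i with hBt
  -- structural matrix identities
  have hA1 : ∀ q, U q * ((U q)ᵀ * A q) = A q :=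
    fun q => RS.proj_mat _ _ (fun j => hproj q _ (hAcol q j))
  have hA2 : ∀ q, A q * U (q + 1) = 0 := by
    intro q
    ext i a
    have h2 := congrFun (hkill q (fun i => U (q + 1) i a) (hUcol (q + 1) a)) i
    simpa [Matrix.mul_apply, Matrix.mulVec, dotProduct] using h2
  have hA3 : ∀ q, A q * (V (q + 1) * (V (q + 1))ᵀ) = A q := by
    intro q
    have h := congrArg (fun M => A q * M) (hcomp (q + 1))
    simp only [Matrix.mul_add, Matrix.mul_one] at h
    rw [← Matrix.mul_assoc, hA2 q, Matrix.zero_mul, zero_add] at h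
    exact h
  have hAdecomp : ∀ q, U q * ((U q)ᵀ * A q * V (q + 1)) * (V (q + 1))ᵀ = A q := by
    intro q
    calc U q * ((U q)ᵀ * A q * V (q + 1)) * (V (q + 1))ᵀ
        = (U q * ((U q)ᵀ * A q)) * (V (q + 1) * (V (q + 1))ᵀ) := by
          simp only [Matrix.mul_assoc]
      _ = A q * (V (q + 1) * (V (q + 1))ᵀ) := by rw [hA1 q]
      _ = A q := hA3 q
  have hPm : ∀ q, U q * ((U q)ᵀ * Bm q) = Bm q :=
    fun q => RS.proj_mat _ _ (fun a => hproj q _ (hBcol q a))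
  have hZ : ∀ q, (V q)ᵀ * Bm q = 0 :=
    fun q => RS.perp_mat _ _ (fun a => hVperp q _ (hBcol q a))
  have hABt : ∀ q, A q * Bt (q + 1) = Bm q := by
    intro q
    ext i a
    have h2 := congrFun (hbtil q a) i
    show ∑ j, A q i j * btil (q + 1) a j = b q a i
    simpa [Matrix.mul_apply, Matrix.mulVec, dotProduct, hBm, hBt] using h2
  have hFS : ∀ q, ((U q)ᵀ * A q * V (q + 1)) * ((V (q + 1))ᵀ * Bt (q + 1))
      = (U q)ᵀ * Bm q := by
    intro q
    have e1 : (U q)ᵀ * A q * V (q + 1) * ((V (q + 1))ᵀ * Bt (q + 1))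
        = (U q)ᵀ * ((A q * (V (q + 1) * (V (q + 1))ᵀ)) * Bt (q + 1)) := by
      simp only [Matrix.mul_assoc]
    rw [e1, hA3 q, hABt q]
    rfl
  have hAV : ∀ q, A q * V (q + 1) = U q * ((U q)ᵀ * A q * V (q + 1)) := by
    intro q
    conv_lhs => rw [← hAdecomp q]
    rw [Matrix.mul_assoc (U q * ((U q)ᵀ * A q * V (q + 1))), hVV (q + 1), Matrix.mul_one]
  -- nonvanishing determinants
  have hFdet : ∀ q, ((U q)ᵀ * A q * V (q + 1)).det ≠ 0 := by
    intro q hdet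
    have hdet' : Matrix.det (n := Fin (prevSize r (q + 1))) ((U q)ᵀ * A q * V (q + 1)) = 0 := hdet
    obtain ⟨v, hv0, hv⟩ := Matrix.exists_mulVec_eq_zero_iff.mpr hdet'
    have h1 : (A q).mulVec ((V (q + 1)).mulVec v) = 0 := by
      rw [Matrix.mulVec_mulVec, hAV q, ← Matrix.mulVec_mulVec,
        show ((U q)ᵀ * A q * V (q + 1)).mulVec v = 0 from hv, Matrix.mulVec_zero]
    have h2 : (V (q + 1)).mulVec v = 0 :=
      hdisj (q + 1) _ (hker q _ h1) (hVmem (q + 1) v)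
    have h3 : v = 0 := by
      have h4 := congrArg (fun w => (V (q + 1))ᵀ.mulVec w) h2
      simpa [Matrix.mulVec_mulVec, hVV (q + 1)] using h4
    exact hv0 h3
  have hPdet : ∀ q, ((U q)ᵀ * Bm q).det ≠ 0 := by
    intro q hdet
    obtain ⟨v, hv0, hv⟩ := Matrix.exists_mulVec_eq_zero_iff.mpr hdet
    have h1 : (Bm q).mulVec v = 0 := by
      have h2 : (Bm q).mulVec v = (U q).mulVec (((U q)ᵀ * Bm q).mulVec v) := by
        rw [Matrix.mulVec_mulVec, hPm q]
      rw [h2, hv, Matrix.mulVec_zero]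
    have h2 : ∀ a, v a = 0 := by
      apply Fintype.linearIndependent_iff.mp (hbind q)
      have h3 : ∑ a, v a • b q a = (Bm q).mulVec v := by
        funext i
        rw [Finset.sum_apply]
        simp [Matrix.mulVec, dotProduct, hBm, mul_comm]
      rw [h3, h1]
    exact hv0 (funext h2)
  have hSdet : ∀ q, ((V q)ᵀ * Bt q).det ≠ 0 := by
    intro q
    match q with
    | 0 =>
      haveI : IsEmpty (Fin (prevSize r 0)) := inferInstanceAs (IsEmpty (Fin 0))
      rw [Matrix.det_isEmpty]
      exact one_ne_zero
    | Nat.succ q =>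
      show ((V (q + 1))ᵀ * Bt (q + 1)).det ≠ 0
      intro h0
      have hd := congrArg Matrix.det (hFS q)
      have hd := (Matrix.det_mul ((U q)ᵀ * A q * V (q + 1)) ((V (q + 1))ᵀ * Bt (q + 1))).symm.trans hd
      have hd' : ((U q)ᵀ * A q * V (q + 1)).det * ((V (q + 1))ᵀ * Bt (q + 1)).det
          = ((U q)ᵀ * Bm q).det := hd
      rw [h0, mul_zero] at hd'
      exact hPdet q hd'.symm
  -- vanishing at the top degree
  have hnN1 : n (N + 1) = 0 := hfin (N + 1) (by omega)
  haveI hIe : IsEmpty (Fin (n (N + 1))) := by rw [hnN1]; infer_instance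
  have hWN : LinearMap.range (Matrix.mulVecLin (A N)) = ⊥ := by
    rw [LinearMap.range_eq_bot]
    apply LinearMap.ext
    intro y
    funext i
    simp [Matrix.mulVecLin_apply, Matrix.mulVec, dotProduct]
  have hrN : r N = 0 := by
    by_contra h
    have hb0 : b N ⟨0, Nat.pos_of_ne_zero h⟩ = 0 := by
      have hm : b N ⟨0, Nat.pos_of_ne_zero h⟩ ∈ Submodule.span ℝ (Set.range (b N)) :=
        Submodule.subset_span (Set.mem_range_self _)
      rw [hbspan N, hWN, Submodule.mem_bot] at hm
      exact hm
    exact (hbind N).ne_zero _ hb0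
  haveI hIrN : IsEmpty (Fin (r N)) := by rw [hrN]; infer_instance
  -- the three sequences of logarithms
  set pf : ℕ → ℝ := fun q => Real.log |((U q)ᵀ * Bm q).det| with hpf
  set sf : ℕ → ℝ := fun q => Real.log |((V q)ᵀ * Bt q).det| with hsf
  set φf : ℕ → ℝ := fun q => match q with
    | 0 => (0 : ℝ)
    | Nat.succ q' => Real.log |((U q')ᵀ * A q' * V (q' + 1)).det| with hφf
  have hφsucc : ∀ q, φf (q + 1) = Real.log |((U q)ᵀ * A q * V (q + 1)).det| := fun q => rfl
  have hs0 : sf 0 = 0 := by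
    haveI : IsEmpty (Fin (prevSize r 0)) := inferInstanceAs (IsEmpty (Fin 0))
    rw [hsf]
    simp [Matrix.det_isEmpty]
  have hφ0 : φf 0 = 0 := rfl
  have hss : ∀ q, sf (q + 1) = pf q - φf (q + 1) := by
    intro q
    have hd := congrArg Matrix.det (hFS q)
    have hd := (Matrix.det_mul ((U q)ᵀ * A q * V (q + 1)) ((V (q + 1))ᵀ * Bt (q + 1))).symm.trans hd
    have hd' : ((U q)ᵀ * A q * V (q + 1)).det * ((V (q + 1))ᵀ * Bt (q + 1)).det
        = ((U q)ᵀ * Bm q).det := hd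
    have h4 : Real.log |((U q)ᵀ * A q * V (q + 1)).det| + Real.log |((V (q + 1))ᵀ * Bt (q + 1)).det|
        = Real.log |((U q)ᵀ * Bm q).det| := by
      rw [← Real.log_mul (abs_ne_zero.mpr (hFdet q)) (abs_ne_zero.mpr (hSdet (q + 1))),
        ← abs_mul, hd']
    rw [hsf, hpf, hφsucc q]
    simp only []
    linarith [h4]
  have hpN : pf N = 0 := by
    rw [hpf]
    simp [Matrix.det_isEmpty]
  have hφN : φf (N + 1) = 0 := by
    rw [hφsucc N]
    rw [show ((U N)ᵀ * A N * V (N + 1)).det = 1 from Matrix.det_isEmpty]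
    simp
  -- identification of the torsion terms
  have hM : ∀ q, Real.log |(Matrix.of fun i j =>
      Fin.append (b q) (btil q) (Fin.cast (hn q).symm j) i).det| = pf q + sf q := by
    intro q
    have hMeq : (Matrix.of fun i j =>
        Fin.append (b q) (btil q) (Fin.cast (hn q).symm j) i)
        = (fromCols (Bm q) (Bt q)).submatrix id
            ⇑((finCongr (hn q).symm).trans finSumFinEquiv.symm) := by
      ext i j
      simp only [Matrix.of_apply, Matrix.submatrix_apply, id_eq, Equiv.trans_apply,
        finCongr_apply]
      generalize Fin.cast (hn q).symm j = j'
      rcases hsum : finSumFinEquiv.symm j' with a | c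
      · have h2 := Equiv.apply_symm_apply finSumFinEquiv j'
        rw [hsum, finSumFinEquiv_apply_left] at h2
        rw [← h2, Fin.append_left, fromCols_apply_inl]
        simp [hBm]
      · have h2 := Equiv.apply_symm_apply finSumFinEquiv j'
        rw [hsum, finSumFinEquiv_apply_right] at h2
        rw [← h2, Fin.append_right, fromCols_apply_inr]
        simp [hBt]
    rw [hMeq, RS.det_cols (hn q) (U q) (V q) (hcomp q) (Bm q) (Bt q) (hZ q),
      Real.log_mul (abs_ne_zero.mpr (hPdet q)) (abs_ne_zero.mpr (hSdet q))]
  -- identification of the Laplacian terms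
  have hLap : ∀ q, Real.log (negLap n A q).det = 2 * φf (q + 1) + 2 * φf q := by
    intro q
    match q with
    | 0 =>
      haveI : IsEmpty (Fin (prevSize r 0)) := inferInstanceAs (IsEmpty (Fin 0))
      have hV0 : V 0 * (1 : Matrix (Fin (prevSize r 0)) (Fin (prevSize r 0)) ℝ) * (V 0)ᵀ
          = 0 := by
        ext i j
        simp [Matrix.mul_apply]
      have hL0 : negLap n A 0
          = U 0 * (((U 0)ᵀ * A 0 * V 1) * ((U 0)ᵀ * A 0 * V 1)ᵀ) * (U 0)ᵀ
            + V 0 * (1 : Matrix (Fin (prevSize r 0)) (Fin (prevSize r 0)) ℝ) * (V 0)ᵀ := by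
        show A 0 * (A 0)ᵀ = _
        rw [hV0, add_zero]
        conv_lhs => rw [← hAdecomp 0]
        exact RS.conj_helper _ _ _ (hVV 1)
      have hval : (negLap n A 0).det = ((U 0)ᵀ * A 0 * V 1).det ^ 2 := by
        rw [hL0, RS.det_conj (hn 0) (U 0) (V 0) (hcomp 0), Matrix.det_one, mul_one,
          show (((U 0)ᵀ * A 0 * V 1) * ((U 0)ᵀ * A 0 * V 1)ᵀ).det = ((U 0)ᵀ * A 0 * V 1).det ^ 2
            from RS.det_mul_tr _]
      rw [hval, Real.log_pow, hφsucc 0, hφ0, Real.log_abs]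
      push_cast
      ring
    | Nat.succ q =>
      show Real.log (negLap n A (q + 1)).det = 2 * φf (q + 1 + 1) + 2 * φf (q + 1)
      have e1 : A (q + 1) * (A (q + 1))ᵀ
          = U (q + 1) * (((U (q + 1))ᵀ * A (q + 1) * V (q + 2))
              * ((U (q + 1))ᵀ * A (q + 1) * V (q + 2))ᵀ) * (U (q + 1))ᵀ := by
        conv_lhs => rw [← hAdecomp (q + 1)]
        exact RS.conj_helper _ _ _ (hVV (q + 2))
      have e2 : (A q)ᵀ * A q
          = V (q + 1) * (((U q)ᵀ * A q * V (q + 1))ᵀ * ((U q)ᵀ * A q * V (q + 1)))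
            * (V (q + 1))ᵀ := by
        conv_lhs => rw [← hAdecomp q]
        exact RS.conj_helper2 _ _ _ (hUU q)
      have hL1 : negLap n A (q + 1)
          = U (q + 1) * (((U (q + 1))ᵀ * A (q + 1) * V (q + 2))
              * ((U (q + 1))ᵀ * A (q + 1) * V (q + 2))ᵀ) * (U (q + 1))ᵀ
            + V (q + 1) * (((U q)ᵀ * A q * V (q + 1))ᵀ * ((U q)ᵀ * A q * V (q + 1)))
              * (V (q + 1))ᵀ := by
        show A (q + 1) * (A (q + 1))ᵀ + (A q)ᵀ * A q = _
        rw [e1, e2]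
      have hX : (((U (q + 1))ᵀ * A (q + 1) * V (q + 2))
            * ((U (q + 1))ᵀ * A (q + 1) * V (q + 2))ᵀ).det
          = ((U (q + 1))ᵀ * A (q + 1) * V (q + 2)).det ^ 2 := by
        exact RS.det_mul_tr _
      have hY : ((((U q)ᵀ * A q * V (q + 1))ᵀ) * ((U q)ᵀ * A q * V (q + 1))).det
          = ((U q)ᵀ * A q * V (q + 1)).det ^ 2 := by
        exact RS.det_tr_mul _
      have hval : (negLap n A (q + 1)).det
          = ((U (q + 1))ᵀ * A (q + 1) * V (q + 2)).det ^ 2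
            * ((U q)ᵀ * A q * V (q + 1)).det ^ 2 := by
        rw [hL1, RS.det_conj (hn (q + 1)) (U (q + 1)) (V (q + 1)) (hcomp (q + 1)), hX, hY]
      rw [hval, Real.log_mul (pow_ne_zero 2 (hFdet (q + 1))) (pow_ne_zero 2 (hFdet q)),
        Real.log_pow, Real.log_pow, hφsucc (q + 1), hφsucc q, Real.log_abs, Real.log_abs]
      push_cast
      ring
  -- assemble
  calc ∑ q ∈ Finset.range (N + 1), (-1 : ℝ) ^ q *
        Real.log |(Matrix.of fun i j =>
          Fin.append (b q) (btil q) (Fin.cast (hn q).symm j) i).det|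
      = ∑ q ∈ Finset.range (N + 1), (-1 : ℝ) ^ q * (pf q + sf q) := by
        apply Finset.sum_congr rfl
        intro q _
        rw [hM q]
    _ = (1 / 2) * ∑ q ∈ Finset.range (N + 1),
          (-1 : ℝ) ^ (q + 1) * q * (2 * φf (q + 1) + 2 * φf q) :=
        RS.sum_id pf sf φf N hs0 hφ0 hss hpN hφN
    _ = (1 / 2) * ∑ q ∈ Finset.range (N + 1), (-1 : ℝ) ^ (q + 1) * q *
          Real.log (negLap n A q).det := by
        congr 1
        apply Finset.sum_congr rfl
        intro q _
        rw [hLap q]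
end

section
/- The map (z₁,z₂) ↦ (z₂,z₁) on S³ descends to a homeomorphism between the lens spaces L(p,q) and L(p,q'), where qq' ≡ 1 mod p. -/
/-- The unit sphere `S³ = {(z₁,z₂) ∈ ℂ² : |z₁|² + |z₂|² = 1}`. -/
abbrev Sphere3 : Type := {z : ℂ × ℂ // ‖z.1‖ ^ 2 + ‖z.2‖ ^ 2 = 1}

/-- The orbit relation of the `ℤ_p` action on `S³` generated by
`(z₁, z₂) ↦ (e^{2πi/p} z₁, e^{2πiq/p} z₂)`. -/
def lensRel (p q : ℕ) : Sphere3 → Sphere3 → Prop := fun x y =>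
  ∃ k : ℤ, y.val.1 = Complex.exp (2 * Real.pi * Complex.I * k / p) * x.val.1 ∧
    y.val.2 = Complex.exp (2 * Real.pi * Complex.I * q * k / p) * x.val.2

/-- The lens space `L(p,q)`, the quotient of `S³` by the `ℤ_p` action. -/
abbrev LensSpace (p q : ℕ) : Type := Quot (lensRel p q)

/-- The map `(z₁, z₂) ↦ (z₂, z₁)` on `S³`. -/
def swapCoords : Sphere3 → Sphere3 := fun z =>
  ⟨(z.val.2, z.val.1), by rw [add_comm]; exact z.prop⟩

lemma exp_cong (p : ℕ) (hp : 0 < p) (m n : ℤ) (h : (p:ℤ) ∣ (m - n)) :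
    Complex.exp (2 * Real.pi * Complex.I * m / p) =
      Complex.exp (2 * Real.pi * Complex.I * n / p) := by
  obtain ⟨c, hc⟩ := h
  have hpC : (p : ℂ) ≠ 0 := Nat.cast_ne_zero.mpr hp.ne'
  rw [Complex.exp_eq_exp_iff_exists_int]
  refine ⟨c, ?_⟩
  have hm : (m : ℂ) = n + p * c := by
    have : (m : ℤ) = n + p * c := by linarith
    exact_mod_cast congrArg (Int.cast : ℤ → ℂ) this
  field_simp [hm]
  ring
  linear_combination hm

def lensSwapMap (p q q' : ℕ)
    (h : ∀ x y, lensRel p q x y → lensRel p q' (swapCoords x) (swapCoords y)) :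
    LensSpace p q → LensSpace p q' :=
  Quot.lift (fun z => Quot.mk _ (swapCoords z)) (fun a b hr => Quot.sound (h a b hr))

lemma swap_descends (p q q' : ℕ) (hp : 0 < p) (hinv : q * q' ≡ 1 [MOD p]) :
    ∀ x y : Sphere3, lensRel p q x y →
      lensRel p q' (swapCoords x) (swapCoords y) := by
  rintro x y ⟨k, h1, h2⟩
  refine ⟨q * k, ?_, ?_⟩
  · simpa [swapCoords] using h2.trans (by push_cast; ring_nf)
  · simp only [swapCoords]
    rw [h1]
    congr 1
    have hd' : (p:ℤ) ∣ ((q':ℤ) * (q * k) - k) := ?_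
    · have e := exp_cong p hp (q' * (q * k)) k hd'
      convert e.symm using 2
      push_cast
      ring
    have hd0 : (p:ℤ) ∣ (1 : ℤ) - (q * q' : ℕ) := Nat.modEq_iff_dvd.mp hinv
    obtain ⟨c0, hc0⟩ := hd0
    have hc : (q:ℤ) * q' - 1 = p * (-c0) := by push_cast at hc0 ⊢; linarith
    set c := -c0
    exact ⟨c * k, by linear_combination k * hc⟩

/-- The map `(z₁, z₂) ↦ (z₂, z₁)` on `S³` descends to a homeomorphism between the lens
spaces `L(p,q)` and `L(p,q′)`, where `q q′ ≡ 1 mod p`. -/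
theorem lens_swap_homeomorph (p q q' : ℕ) (h0q : 0 < q) (hqp : q < p)
    (hco : Nat.Coprime p q) (hinv : q * q' ≡ 1 [MOD p]) :
    ∃ F : LensSpace p q ≃ₜ LensSpace p q',
      ∀ z : Sphere3, F (Quot.mk _ z) = Quot.mk _ (swapCoords z) := by
  have hp : 0 < p := h0q.trans hqp
  have hinv' : q' * q ≡ 1 [MOD p] := by rwa [Nat.mul_comm] at hinv
  have hcont : Continuous swapCoords := by
    apply Continuous.subtype_mk
    exact (continuous_snd.comp continuous_subtype_val).prodMk
      (continuous_fst.comp continuous_subtype_val)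
  have hF := swap_descends p q q' hp hinv
  have hG := swap_descends p q' q hp hinv'
  let F := lensSwapMap p q q' hF
  let G := lensSwapMap p q' q hG
  have hGF : ∀ x, G (F x) = x := by
    apply Quot.ind
    intro z
    show Quot.mk (lensRel p q) (swapCoords (swapCoords z)) = Quot.mk (lensRel p q) z
    exact congrArg _ (Subtype.ext rfl)
  have hFG : ∀ x, F (G x) = x := by
    apply Quot.ind
    intro z
    show Quot.mk (lensRel p q') (swapCoords (swapCoords z)) = Quot.mk (lensRel p q') z
    exact congrArg _ (Subtype.ext rfl)
  refine ⟨⟨⟨F, G, hGF, hFG⟩, ?_, ?_⟩, fun z => rfl⟩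
  · exact continuous_quot_lift _ (continuous_quot_mk.comp hcont)
  · exact continuous_quot_lift _ (continuous_quot_mk.comp hcont)
end
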